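/- Let M, K, h be positive real numbers and let β ≥ 1/4. Then every pair of real sequences (x_k), (v_k) satisfying the SyLiPN recursion x_{k+1} = x_k + h v_k + ½ h² a_k, v_{k+1} = v_k + ½ h (a_k + a_{k+1}), M a_k = −K x_k − K β h² a_k is bounded: there exists a constant C (depending on x_0, v_0, M, K, h, β) such that |x_k| + |v_k| ≤ C for all k. -/

import Mathlib

/-- Linear unconditional stability of SyLiPN in the scalar case.
For positive `M`, `K`, `h` and `β ≥ 1/4`, every trajectory of the SyLiPN recursion
applied to `V(x) = ½ K x²` is bounded. -/
theorem stmt_3 (M K h β : ℝ) (hM : 0 < M) (hK : 0 < K) (hh : 0 < h)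
    (hβ : β ≥ 1 / 4)
    (x v a : ℕ → ℝ)
    (hx : ∀ k, x (k + 1) = x k + h * v k + (1 / 2) * h ^ 2 * a k)
    (hv : ∀ k, v (k + 1) = v k + (1 / 2) * h * (a k + a (k + 1)))
    (ha : ∀ k, M * a k = -K * x k - K * β * h ^ 2 * a k) :
    ∃ C : ℝ, ∀ k, |x k| + |v k| ≤ C := by
  have hβ0 : 0 < β := lt_of_lt_of_le (by norm_num) hβ
  set D : ℝ := M + K * β * h ^ 2 with hDdef
  have hD : 0 < D := by positivity
  set c : ℝ := K / D with hcdef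
  have hc : 0 < c := div_pos hK hD
  have ha' : ∀ k, a k = -c * x k := by
    intro k
    have h1 := ha k
    have h2 : D * a k = -K * x k := by rw [hDdef]; linarith
    rw [hcdef]; field_simp
    linarith
  -- c * h^2 < 4
  have hch : c * h ^ 2 < 4 := by
    rw [hcdef, div_mul_eq_mul_div, div_lt_iff₀ hD]
    nlinarith
  set α : ℝ := c * (1 - c * h ^ 2 / 4) with hαdef
  have hα : 0 < α := by
    apply mul_pos hc
    linarith
  set Q : ℕ → ℝ := fun k => v k ^ 2 + α * x k ^ 2 with hQdef
  have hstep : ∀ k, Q (k + 1) = Q k := by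
    intro k
    have e1 := hx k
    have e2 := hv k
    have e3 := ha' k
    have e4 := ha' (k + 1)
    simp only [hQdef, hαdef]
    rw [e2, e4, e1, e3]
    ring
  have hQconst : ∀ k, Q k = Q 0 := by
    intro k
    induction k with
    | zero => rfl
    | succ n ih => rw [hstep n, ih]
  refine ⟨Real.sqrt (Q 0 / α) + Real.sqrt (Q 0), fun k => ?_⟩
  have hQk := hQconst k
  have hv2 : v k ^ 2 ≤ Q 0 := by
    have : 0 ≤ α * x k ^ 2 := by positivity
    simp only [hQdef] at hQk ⊢; nlinarith
  have hx2 : x k ^ 2 ≤ Q 0 / α := by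
    rw [le_div_iff₀ hα]
    have : 0 ≤ v k ^ 2 := sq_nonneg _
    simp only [hQdef] at hQk ⊢; nlinarith
  have h1 : |x k| ≤ Real.sqrt (Q 0 / α) := by
    rw [← Real.sqrt_sq_eq_abs]
    exact Real.sqrt_le_sqrt hx2
  have h2 : |v k| ≤ Real.sqrt (Q 0) := by
    rw [← Real.sqrt_sq_eq_abs]
    exact Real.sqrt_le_sqrt hv2
  linarith
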